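/- Evaluation of the ratio of integrals C₁ = (∫_{−∞}^{∞} (t²−1)/(ν+t²)^{(ν+1)β/2} dt) / (∫_{−∞}^{∞} 1/(ν+t²)^{(ν+1)β/2 − 1} dt) equals 1 − ((ν+1)/ν)·(((ν+1)β/2 − 3/2)/((ν+1)β/2 − 1)), provided β > 3/(ν+1) and ν > 0 so that both integrals converge. -/

import Mathlib

open MeasureTheory Real Filter Topology


lemma aux_integrable (ν s : ℝ) (hν : 0 < ν) (hs : s < -(1/2)) :
    Integrable fun t : ℝ ↦ (ν + t ^ 2) ^ s := by
  set m := min ν 1 with hm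
  have hm0 : 0 < m := lt_min hν one_pos
  have pos : ∀ t : ℝ, 0 < ν + t ^ 2 := fun t => by positivity
  have base : Integrable fun t : ℝ => ((1:ℝ) + ‖t‖ ^ 2) ^ (-(-2*s)/2) :=
    integrable_rpow_neg_one_add_norm_sq (E := ℝ) (by simp; linarith)
  have base' : Integrable fun t : ℝ => m ^ s * ((1:ℝ) + t ^ 2) ^ s := by
    have e : ∀ t : ℝ, ((1:ℝ) + ‖t‖ ^ 2) ^ (-(-2*s)/2) = ((1:ℝ) + t ^ 2) ^ s := by
      intro t; rw [Real.norm_eq_abs, sq_abs]; congr 1; ring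
    simp_rw [e] at base
    exact base.const_mul _
  refine base'.mono' ?_ (Filter.Eventually.of_forall fun t => ?_)
  · exact ((continuous_const.add (continuous_pow 2)).rpow_const
      (fun x => Or.inl (pos x).ne')).aestronglyMeasurable
  · rw [Real.norm_eq_abs, abs_of_nonneg (rpow_nonneg (pos t).le s)]
    have h1 : m * (1 + t ^ 2) ≤ ν + t ^ 2 := by
      have := min_le_left ν 1
      have h2 : m ≤ 1 := min_le_right ν 1
      nlinarith [sq_nonneg t]
    have h3 : 0 < m * (1 + t ^ 2) := by positivity
    calc (ν + t ^ 2) ^ s ≤ (m * (1 + t ^ 2)) ^ s :=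
          rpow_le_rpow_of_nonpos h3 h1 (by linarith)
      _ = m ^ s * (1 + t ^ 2) ^ s := mul_rpow hm0.le (by positivity)


lemma aux_deriv (ν p : ℝ) (hν : 0 < ν) (x : ℝ) :
    HasDerivAt (fun t : ℝ => t * (ν + t ^ 2) ^ (1 - p))
      ((ν + x ^ 2) ^ (1 - p) + (2 - 2 * p) * (x ^ 2 * (ν + x ^ 2) ^ (-p))) x := by
  have pos : (0:ℝ) < ν + x ^ 2 := by positivity
  have h1 : HasDerivAt (fun t : ℝ => ν + t ^ 2) (2 * x) x := by
    simpa using (hasDerivAt_pow 2 x).const_add ν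
  have h2 : HasDerivAt (fun t : ℝ => (ν + t ^ 2) ^ (1 - p))
      ((1 - p) * (ν + x ^ 2) ^ (1 - p - 1) * (2 * x)) x :=
    by have h := (Real.hasDerivAt_rpow_const (x := ν + x ^ 2) (p := 1 - p) (Or.inl pos.ne')).comp x h1; exact h
  have h3 : HasDerivAt (fun t : ℝ => t * (ν + t ^ 2) ^ (1 - p))
      (1 * (ν + x ^ 2) ^ (1 - p) + x * ((1 - p) * (ν + x ^ 2) ^ (1 - p - 1) * (2 * x))) x :=
    (hasDerivAt_id' x).mul h2
  convert h3 using 1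
  simp only [id_eq, one_mul]
  rw [show (1 - p - 1) = -p by ring]
  ring

lemma aux_tendsto (ν p : ℝ) (hν : 0 < ν) (hp : 3 / 2 < p) :
    Tendsto (fun t : ℝ => t * (ν + t ^ 2) ^ (1 - p)) atTop (𝓝 0) ∧
    Tendsto (fun t : ℝ => t * (ν + t ^ 2) ^ (1 - p)) atBot (𝓝 0) := by
  have hbound : ∀ x : ℝ, 1 ≤ |x| → ‖x * (ν + x ^ 2) ^ (1 - p)‖ ≤ |x| ^ (3 - 2 * p) := by
    intro x hx
    have pos : (0:ℝ) < ν + x ^ 2 := by positivity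
    have hx0 : (0:ℝ) < |x| := lt_of_lt_of_le one_pos hx
    have h1 : (ν + x ^ 2) ^ (1 - p) ≤ (|x| ^ 2) ^ (1 - p) := by
      apply rpow_le_rpow_of_nonpos (by positivity) (by rw [sq_abs]; nlinarith) (by linarith)
    have h2 : (|x| ^ 2) ^ (1 - p) = |x| ^ (2 * (1 - p)) := by
      rw [← Real.rpow_natCast |x| 2, ← Real.rpow_mul hx0.le]; norm_num
    have h3 : |x| * |x| ^ (2 * (1 - p)) = |x| ^ (3 - 2 * p) := by
      rw [← Real.rpow_one_add' hx0.le (by intro h; nlinarith)]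
      congr 1; ring
    rw [norm_mul, Real.norm_eq_abs, Real.norm_eq_abs,
      abs_of_nonneg (rpow_nonneg pos.le _), ← h3]
    exact mul_le_mul_of_nonneg_left (le_trans h1 (le_of_eq h2)) (abs_nonneg x)
  have htz : Tendsto (fun x : ℝ => |x| ^ (3 - 2 * p)) atTop (𝓝 0) := by
    have := (tendsto_rpow_neg_atTop (y := 2 * p - 3) (by linarith)).comp tendsto_abs_atTop_atTop
    simpa [Function.comp_def, show -(2 * p - 3) = 3 - 2 * p by ring] using this
  have hbz : Tendsto (fun x : ℝ => |x| ^ (3 - 2 * p)) atBot (𝓝 0) := by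
    have := (tendsto_rpow_neg_atTop (y := 2 * p - 3) (by linarith)).comp tendsto_abs_atBot_atTop
    simpa [Function.comp_def, show -(2 * p - 3) = 3 - 2 * p by ring] using this
  constructor
  · refine squeeze_zero_norm' ?_ htz
    filter_upwards [eventually_ge_atTop (1:ℝ)] with x hx
    exact hbound x (by rw [abs_of_nonneg (by linarith)]; exact hx)
  · refine squeeze_zero_norm' ?_ hbz
    filter_upwards [eventually_le_atBot (-1:ℝ)] with x hx
    exact hbound x (by rw [abs_of_nonpos (by linarith)]; linarith)

/-- Evaluation of the ratio of integrals C₁ appearing in the LNRE estimating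
equation for the Student's t scale parameter. -/
theorem C1_integral_ratio (ν β : ℝ) (hν : 0 < ν) (hβ : 3 / (ν + 1) < β) :
    (∫ t : ℝ, (t ^ 2 - 1) / (ν + t ^ 2) ^ ((ν + 1) * β / 2)) /
      (∫ t : ℝ, 1 / (ν + t ^ 2) ^ ((ν + 1) * β / 2 - 1))
    = 1 - ((ν + 1) / ν) * (((ν + 1) * β / 2 - 3 / 2) / ((ν + 1) * β / 2 - 1)) := by
  have hν1 : (0:ℝ) < ν + 1 := by linarith
  set p : ℝ := (ν + 1) * β / 2 with hpdef
  have hp : 3 / 2 < p := by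
    rw [hpdef]
    rw [div_lt_iff₀ hν1] at hβ
    nlinarith
  have pos : ∀ t : ℝ, (0:ℝ) < ν + t ^ 2 := fun t => by positivity
  -- integrabilities
  have hf2 : Integrable fun t : ℝ => (ν + t ^ 2) ^ (1 - p) :=
    aux_integrable ν (1 - p) hν (by linarith)
  have hL : Integrable fun t : ℝ => (ν + t ^ 2) ^ (-p) :=
    aux_integrable ν (-p) hν (by linarith)
  have hg : Integrable fun t : ℝ => t ^ 2 * (ν + t ^ 2) ^ (-p) := by
    refine hf2.mono' ?_ (Filter.Eventually.of_forall fun t => ?_)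
    · exact (continuous_pow 2).aestronglyMeasurable.mul
        ((continuous_const.add (continuous_pow 2)).rpow_const
          (fun x => Or.inl (pos x).ne')).aestronglyMeasurable
    · have h1 : t ^ 2 * (ν + t ^ 2) ^ (-p) ≤ (ν + t ^ 2) * (ν + t ^ 2) ^ (-p) :=
        mul_le_mul_of_nonneg_right (by nlinarith [pos t]) (rpow_nonneg (pos t).le _)
      have h2 : (ν + t ^ 2) * (ν + t ^ 2) ^ (-p) = (ν + t ^ 2) ^ (1 - p) := by
        rw [← Real.rpow_one_add' (pos t).le (by intro h; nlinarith), show 1 + -p = 1 - p by ring]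
      rw [Real.norm_eq_abs, abs_of_nonneg (by positivity)]
      linarith [h1, h2.le]
  -- FTC on the whole line
  have hFTC : ∫ t : ℝ, ((ν + t ^ 2) ^ (1 - p) + (2 - 2 * p) * (t ^ 2 * (ν + t ^ 2) ^ (-p))) = 0 := by
    have := integral_of_hasDerivAt_of_tendsto (aux_deriv ν p hν) (hf2.add ((hg.const_mul (2 - 2 * p))))
      (aux_tendsto ν p hν hp).2 (aux_tendsto ν p hν hp).1
    simpa using this
  set I2 : ℝ := ∫ t : ℝ, (ν + t ^ 2) ^ (1 - p) with hI2def
  set G : ℝ := ∫ t : ℝ, t ^ 2 * (ν + t ^ 2) ^ (-p) with hGdef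
  set Lv : ℝ := ∫ t : ℝ, (ν + t ^ 2) ^ (-p) with hLdef
  have E1 : I2 + (2 - 2 * p) * G = 0 := by
    rw [hI2def, hGdef, ← integral_const_mul, ← integral_add hf2 (hg.const_mul _)]
    exact hFTC
  have E2 : ν * Lv = I2 - G := by
    rw [hLdef, ← integral_const_mul, hI2def, hGdef, ← integral_sub hf2 hg]
    refine integral_congr_ae (Filter.Eventually.of_forall fun t => ?_)
    have h2 : (ν + t ^ 2) * (ν + t ^ 2) ^ (-p) = (ν + t ^ 2) ^ (1 - p) := by
      rw [← Real.rpow_one_add' (pos t).le (by intro h; nlinarith), show 1 + -p = 1 - p by ring]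
    show ν * (ν + t ^ 2) ^ (-p) = (ν + t ^ 2) ^ (1 - p) - t ^ 2 * (ν + t ^ 2) ^ (-p)
    linear_combination h2
  have hI2pos : 0 < I2 := by
    rw [hI2def, integral_pos_iff_support_of_nonneg
      (fun t => rpow_nonneg (pos t).le _) hf2]
    have : Function.support (fun t : ℝ => (ν + t ^ 2) ^ (1 - p)) = Set.univ :=
      Set.eq_univ_of_forall fun t => (rpow_pos_of_pos (pos t) _).ne'
    rw [this]
    simp
  -- rewrite the two integrals in the statement
  have hA : (∫ t : ℝ, (t ^ 2 - 1) / (ν + t ^ 2) ^ p) = G - Lv := by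
    rw [hGdef, hLdef, ← integral_sub hg hL]
    refine integral_congr_ae (Filter.Eventually.of_forall fun t => ?_)
    show (t ^ 2 - 1) / (ν + t ^ 2) ^ p = t ^ 2 * (ν + t ^ 2) ^ (-p) - (ν + t ^ 2) ^ (-p)
    rw [Real.rpow_neg (pos t).le, sub_div, div_eq_mul_inv, div_eq_mul_inv, one_mul]
  have hB : (∫ t : ℝ, 1 / (ν + t ^ 2) ^ (p - 1)) = I2 := by
    rw [hI2def]
    refine integral_congr_ae (Filter.Eventually.of_forall fun t => ?_)
    show 1 / (ν + t ^ 2) ^ (p - 1) = (ν + t ^ 2) ^ (1 - p)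
    rw [one_div, ← Real.rpow_neg (pos t).le, neg_sub]
  rw [hA, hB]
  -- algebra
  have hG : G = I2 / (2 * p - 2) := by
    have h2p : (2 * p - 2) ≠ 0 := by intro h; nlinarith
    rw [eq_div_iff h2p]
    linarith [E1]
  have hLv : Lv = (I2 - G) / ν := by
    field_simp
    linarith [E2]
  rw [hG, hLv, hG]
  have h2p : (2 * p - 2) ≠ 0 := by intro h; nlinarith
  have hp1 : (p - 1) ≠ 0 := by intro h; nlinarith
  field_simp
  ring
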